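/- Let F ∈ ℂ[x₁,…,xₙ, z] be irreducible of degree d ≥ 1 in z with leading coefficient G ∈ ℂ[x₁,…,xₙ], and let A ∈ ℤ^{n×n} be a nonsingular matrix. Then the Laurent polynomial F(x^A, z) (substituting each xⱼ by the monomial given by the j-th row of A) has no nontrivial factors lying in the localization ℂ[x^{±1}]_G; equivalently, every irreducible factor of F(x^A, z) has positive degree in z. -/

import Mathlib

open Finsupp AddMonoidAlgebra

noncomputable section Stmt12Aux

variable {n : ℕ}

/-- coercion of exponent vectors -/
def s12coe (n : ℕ) : (Fin n →₀ ℕ) →+ (Fin n → ℤ) where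
  toFun v := fun i => (v i : ℤ)
  map_zero' := by ext i; simp
  map_add' x y := by ext i; simp

lemma s12coe_inj : Function.Injective (s12coe n) := by
  intro v w h
  ext i
  have := congrFun h i
  simpa [s12coe] using this

/-- the additive hom v ↦ vᵀA -/
def s12fA (A : Matrix (Fin n) (Fin n) ℤ) : (Fin n → ℤ) →+ (Fin n → ℤ) where
  toFun v := Matrix.vecMul v A
  map_zero' := by simp [Matrix.zero_vecMul]
  map_add' x y := by simp [Matrix.add_vecMul]

lemma s12fA_inj (A : Matrix (Fin n) (Fin n) ℤ) (hA : A.det ≠ 0) :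
    Function.Injective (s12fA A) := by
  intro v w h
  have h2 : Matrix.vecMul (Matrix.vecMul v A) A.adjugate
      = Matrix.vecMul (Matrix.vecMul w A) A.adjugate := by
    simp only [s12fA] at h
    simp_all
  rw [Matrix.vecMul_vecMul, Matrix.vecMul_vecMul, Matrix.mul_adjugate] at h2
  have key : ∀ u : Fin n → ℤ, Matrix.vecMul u (A.det • (1 : Matrix (Fin n) (Fin n) ℤ))
      = A.det • u := by
    intro u; ext i
    simp [Matrix.vecMul, dotProduct, Matrix.one_apply, mul_ite, mul_comm]
  rw [key, key] at h2
  ext i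
  have := congrFun h2 i
  simp only [Pi.smul_apply, smul_eq_mul] at this
  exact mul_left_cancel₀ hA this

/-- standard embedding of polynomials into Laurent polynomials -/
def s12iota (n : ℕ) : MvPolynomial (Fin n) ℂ →+* AddMonoidAlgebra ℂ (Fin n → ℤ) :=
  AddMonoidAlgebra.mapDomainRingHom ℂ (s12coe n)

/-- monoidal substitution on Laurent polynomials -/
def s12phiHat (A : Matrix (Fin n) (Fin n) ℤ) :
    AddMonoidAlgebra ℂ (Fin n → ℤ) →+* AddMonoidAlgebra ℂ (Fin n → ℤ) :=
  AddMonoidAlgebra.mapDomainRingHom ℂ (s12fA A)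

lemma s12iota_apply (p : MvPolynomial (Fin n) ℂ) :
    s12iota n p = AddMonoidAlgebra.mapDomain (s12coe n) p := rfl

lemma s12phiHat_apply (A : Matrix (Fin n) (Fin n) ℤ) (r : AddMonoidAlgebra ℂ (Fin n → ℤ)) :
    s12phiHat A r = AddMonoidAlgebra.mapDomain (s12fA A) r := rfl

lemma s12iota_inj : Function.Injective (s12iota n) :=
  AddMonoidAlgebra.mapDomain_injective s12coe_inj

lemma s12phiHat_inj (A : Matrix (Fin n) (Fin n) ℤ) (hA : A.det ≠ 0) :
    Function.Injective (s12phiHat A) :=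
  AddMonoidAlgebra.mapDomain_injective (s12fA_inj A hA)

lemma s12iota_monomial (v : Fin n →₀ ℕ) (a : ℂ) :
    s12iota n (MvPolynomial.monomial v a) = AddMonoidAlgebra.single (s12coe n v) a := by
  rw [s12iota_apply, ← MvPolynomial.single_eq_monomial]
  exact AddMonoidAlgebra.mapDomain_single

lemma s12phiHat_single (A : Matrix (Fin n) (Fin n) ℤ) (v : Fin n → ℤ) (a : ℂ) :
    s12phiHat A (AddMonoidAlgebra.single v a) = AddMonoidAlgebra.single (s12fA A v) a := by
  rw [s12phiHat_apply]
  exact AddMonoidAlgebra.mapDomain_single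

lemma s12phi_eq (A : Matrix (Fin n) (Fin n) ℤ) :
    (MvPolynomial.eval₂Hom (AddMonoidAlgebra.singleZeroRingHom)
      (fun j => AddMonoidAlgebra.single (fun i => A j i) (1:ℂ)))
    = (s12phiHat A).comp (s12iota n) := by
  apply MvPolynomial.ringHom_ext
  · intro a
    rw [MvPolynomial.eval₂Hom_C]
    rw [RingHom.comp_apply, MvPolynomial.C_apply, s12iota_monomial, s12phiHat_single]
    simp [AddMonoidAlgebra.singleZeroRingHom]
  · intro j
    rw [MvPolynomial.eval₂Hom_X']
    rw [RingHom.comp_apply, MvPolynomial.X, s12iota_monomial, s12phiHat_single]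
    congr 1
    ext i
    simp [s12fA, s12coe, Matrix.vecMul, dotProduct, Finsupp.single_apply]

/-- elements supported in the range of an injection are in the range of mapDomain -/
lemma s12mem_range_mapDomain {α β : Type*} [DecidableEq β] (g : α → β) (s : β →₀ ℂ)
    (h : ↑s.support ⊆ Set.range g) : ∃ t : α →₀ ℂ, Finsupp.mapDomain g t = s := by
  induction s using Finsupp.induction with
  | zero => exact ⟨0, Finsupp.mapDomain_zero⟩
  | single_add b c f hbf hc ih =>
    have hsupp : (Finsupp.single b c + f).support = insert b f.support := by
      rw [Finsupp.support_add_eq, Finsupp.support_single_ne_zero _ hc]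
      · ext x; simp [or_comm]
      · rw [Finsupp.support_single_ne_zero _ hc]
        simpa using hbf
    rw [hsupp] at h
    obtain ⟨a, ha⟩ : b ∈ Set.range g := h (by simp)
    obtain ⟨t, ht⟩ := ih (fun x hx => h (by simp [hx]))
    exact ⟨Finsupp.single a c + t, by
      rw [Finsupp.mapDomain_add, Finsupp.mapDomain_single, ha, ht]⟩


section Chars

variable {n : ℕ}

/-- integer lift of a `ZMod` vector -/
def s12lift (m : ℕ) (u : Fin n → ZMod m) : Fin n → ℤ := fun i => ((u i).val : ℤ)

/-- the character exponent vector attached to `u` -/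
def s12bvec (A : Matrix (Fin n) (Fin n) ℤ) (m : ℕ) (u : Fin n → ZMod m) : Fin n → ℤ :=
  A.adjugate.mulVec (s12lift m u)

/-- the multiplicative character -/
def s12chi (ζ : ℂ) (hζ : ζ ≠ 0) (b : Fin n → ℤ) :
    Multiplicative (Fin n → ℤ) →* AddMonoidAlgebra ℂ (Fin n → ℤ) where
  toFun v := AddMonoidAlgebra.single (Multiplicative.toAdd v)
      (ζ ^ (dotProduct b (Multiplicative.toAdd v)))
  map_one' := by
    simp [AddMonoidAlgebra.one_def]
  map_mul' x y := by
    simp [AddMonoidAlgebra.single_mul_single, dotProduct_add, zpow_add₀ hζ]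

/-- the ring automorphism given by a character -/
def s12sigma (ζ : ℂ) (hζ : ζ ≠ 0) (b : Fin n → ℤ) :
    AddMonoidAlgebra ℂ (Fin n → ℤ) →ₐ[ℂ] AddMonoidAlgebra ℂ (Fin n → ℤ) :=
  AddMonoidAlgebra.lift ℂ (AddMonoidAlgebra ℂ (Fin n → ℤ)) (Fin n → ℤ) (s12chi ζ hζ b)

lemma s12sigma_single (ζ : ℂ) (hζ : ζ ≠ 0) (b v : Fin n → ℤ) (c : ℂ) :
    s12sigma ζ hζ b (AddMonoidAlgebra.single v c)
      = AddMonoidAlgebra.single v (c * ζ ^ (dotProduct b v)) := by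
  rw [s12sigma, AddMonoidAlgebra.lift_single]
  simp [s12chi, Finsupp.smul_single, smul_eq_mul]

lemma s12sigma_apply (ζ : ℂ) (hζ : ζ ≠ 0) (b : Fin n → ℤ)
    (r : AddMonoidAlgebra ℂ (Fin n → ℤ)) (v : Fin n → ℤ) :
    (s12sigma ζ hζ b r).coeff v = ζ ^ (dotProduct b v) * r.coeff v := by
  induction r using AddMonoidAlgebra.induction_linear with
  | zero => simp
  | add f g hf hg =>
    rw [map_add, AddMonoidAlgebra.coeff_add, AddMonoidAlgebra.coeff_add, Finsupp.add_apply,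
      Finsupp.add_apply]; rw [hf, hg]; ring
  | single a x =>
    rw [s12sigma_single]
    rcases eq_or_ne a v with rfl | hav
    · simp [AddMonoidAlgebra.coeff_single, Finsupp.single_apply]; ring
    · simp [AddMonoidAlgebra.coeff_single, Finsupp.single_apply, hav]

lemma s12sigma_comp (ζ : ℂ) (hζ : ζ ≠ 0) (b b' : Fin n → ℤ)
    (r : AddMonoidAlgebra ℂ (Fin n → ℤ)) :
    s12sigma ζ hζ b (s12sigma ζ hζ b' r) = s12sigma ζ hζ (b + b') r := by
  ext v
  simp [s12sigma_apply, add_dotProduct, zpow_add₀ hζ]; ring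

lemma s12zpow_congr {ζ : ℂ} (hζ : ζ ≠ 0) {m : ℕ} (hζm : ζ ^ (m:ℤ) = 1) {s t : ℤ}
    (h : (m:ℤ) ∣ s - t) : ζ ^ s = ζ ^ t := by
  obtain ⟨k, hk⟩ := h
  have : s = t + m * k := by linarith
  rw [this, zpow_add₀ hζ, zpow_mul, hζm, one_zpow, mul_one]

lemma s12sigma_congr {ζ : ℂ} (hζ : ζ ≠ 0) {m : ℕ} (hζm : ζ ^ (m:ℤ) = 1) {b b' : Fin n → ℤ}
    (h : ∀ i, (m:ℤ) ∣ b i - b' i) (r : AddMonoidAlgebra ℂ (Fin n → ℤ)) :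
    s12sigma ζ hζ b r = s12sigma ζ hζ b' r := by
  ext v
  rw [s12sigma_apply, s12sigma_apply]
  congr 1
  apply s12zpow_congr hζ hζm
  rw [← sub_dotProduct]
  exact Finset.dvd_sum (fun i _ => Dvd.dvd.mul_right (h i) _)

lemma s12lift_add (m : ℕ) [NeZero m] (u u' : Fin n → ZMod m) (i : Fin n) :
    (m:ℤ) ∣ s12lift m (u + u') i - (s12lift m u i + s12lift m u' i) := by
  rw [← ZMod.intCast_zmod_eq_zero_iff_dvd]
  push_cast [s12lift, ZMod.natCast_val, ZMod.intCast_zmod_cast]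
  simp [Pi.add_apply]

lemma s12bvec_add (A : Matrix (Fin n) (Fin n) ℤ) (m : ℕ) [NeZero m] (u u' : Fin n → ZMod m)
    (i : Fin n) : (m:ℤ) ∣ s12bvec A m (u + u') i - (s12bvec A m u + s12bvec A m u') i := by
  simp only [s12bvec, Matrix.mulVec, dotProduct, Pi.add_apply,
    ← Finset.sum_add_distrib, ← Finset.sum_sub_distrib]
  refine Finset.dvd_sum (fun j _ => ?_)
  have : A.adjugate i j * s12lift m (u + u') j -
      (A.adjugate i j * s12lift m u j + A.adjugate i j * s12lift m u' j)
      = A.adjugate i j * (s12lift m (u + u') j - (s12lift m u j + s12lift m u' j)) := by ring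
  rw [this]
  exact Dvd.dvd.mul_left (by simpa [sub_add_eq_sub_sub] using s12lift_add m u u' j) _

lemma s12bvec_zero (A : Matrix (Fin n) (Fin n) ℤ) (m : ℕ) [NeZero m] :
    s12bvec A m (0 : Fin n → ZMod m) = 0 := by
  have : s12lift m (0 : Fin n → ZMod m) = 0 := by
    ext i; simp [s12lift]
  simp [s12bvec, this]

/-- the norm -/
def s12N (A : Matrix (Fin n) (Fin n) ℤ) (m : ℕ) [NeZero m] (ζ : ℂ) (hζ : ζ ≠ 0)
    (c : AddMonoidAlgebra ℂ (Fin n → ℤ)) : AddMonoidAlgebra ℂ (Fin n → ℤ) :=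
  ∏ u : Fin n → ZMod m, s12sigma ζ hζ (s12bvec A m u) c

variable {A : Matrix (Fin n) (Fin n) ℤ} {m : ℕ} [NeZero m] {ζ : ℂ} {hζ : ζ ≠ 0}

lemma s12N_fixed (hζm : ζ ^ (m:ℤ) = 1) (u₀ : Fin n → ZMod m)
    (c : AddMonoidAlgebra ℂ (Fin n → ℤ)) :
    s12sigma ζ hζ (s12bvec A m u₀) (s12N A m ζ hζ c) = s12N A m ζ hζ c := by
  rw [s12N, map_prod]
  have step : ∀ u : Fin n → ZMod m,
      s12sigma ζ hζ (s12bvec A m u₀) (s12sigma ζ hζ (s12bvec A m u) c)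
      = s12sigma ζ hζ (s12bvec A m (u₀ + u)) c := by
    intro u
    rw [s12sigma_comp]
    apply s12sigma_congr hζ hζm
    intro i
    exact dvd_sub_comm.mp (s12bvec_add A m u₀ u i)
  calc (∏ u : Fin n → ZMod m, s12sigma ζ hζ (s12bvec A m u₀) (s12sigma ζ hζ (s12bvec A m u) c))
      = ∏ u : Fin n → ZMod m, s12sigma ζ hζ (s12bvec A m (u₀ + u)) c := by
        exact Finset.prod_congr rfl (fun u _ => step u)
    _ = s12N A m ζ hζ c := Fintype.prod_equiv (Equiv.addLeft u₀) _ _ (fun u => rfl)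

lemma s12sigma_zero (c : AddMonoidAlgebra ℂ (Fin n → ℤ)) :
    s12sigma ζ hζ (0 : Fin n → ℤ) c = c := by
  ext v; rw [s12sigma_apply]; simp

lemma s12N_dvd_self (c : AddMonoidAlgebra ℂ (Fin n → ℤ)) : c ∣ s12N A m ζ hζ c := by
  have h0 : s12sigma ζ hζ (s12bvec A m (0 : Fin n → ZMod m)) c ∣ s12N A m ζ hζ c :=
    Finset.dvd_prod_of_mem
      (fun u : Fin n → ZMod m => s12sigma ζ hζ (s12bvec A m u) c) (Finset.mem_univ 0)
  rwa [s12bvec_zero, s12sigma_zero] at h0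

lemma s12N_mul (c r : AddMonoidAlgebra ℂ (Fin n → ℤ)) :
    s12N A m ζ hζ (c * r) = s12N A m ζ hζ c * s12N A m ζ hζ r := by
  simp [s12N, map_mul, Finset.prod_mul_distrib]

lemma s12N_ne_zero (c : AddMonoidAlgebra ℂ (Fin n → ℤ)) (hc : c ≠ 0) :
    s12N A m ζ hζ c ≠ 0 := by
  rw [s12N, Finset.prod_ne_zero_iff]
  intro u _
  intro h0
  apply hc
  ext v
  have := congrArg (fun r : AddMonoidAlgebra ℂ (Fin n → ℤ) => r.coeff v) h0
  simp only [s12sigma_apply] at this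
  simpa using (mul_eq_zero.mp this).resolve_left (zpow_ne_zero _ hζ)

lemma s12N_isUnit (c : AddMonoidAlgebra ℂ (Fin n → ℤ)) (h : IsUnit (s12N A m ζ hζ c)) :
    IsUnit c := isUnit_of_dvd_unit (s12N_dvd_self c) h

/-- `σ` fixes elements supported on the image lattice -/
lemma s12sigma_fixes (hm : m = A.det.natAbs) (hζm : ζ ^ (m:ℤ) = 1) (u : Fin n → ZMod m)
    (t : AddMonoidAlgebra ℂ (Fin n → ℤ)) (ht : ↑t.coeff.support ⊆ Set.range (s12fA A)) :
    s12sigma ζ hζ (s12bvec A m u) t = t := by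
  ext v
  rw [s12sigma_apply]
  rcases eq_or_ne (t.coeff v) 0 with h | h
  · simp [h]
  · have hv : v ∈ Set.range (s12fA A) := ht (Finsupp.mem_support_iff.mpr h)
    obtain ⟨w, rfl⟩ := hv
    have hpow : ζ ^ (dotProduct (s12bvec A m (u : Fin n → ZMod m)) (s12fA A w)) = 1 := by
      have hdot : dotProduct (s12bvec A m u) (s12fA A w)
          = A.det * dotProduct w (s12lift m u) := by
        show dotProduct (A.adjugate.mulVec (s12lift m u)) (Matrix.vecMul w A) = _
        rw [dotProduct_comm, Matrix.dotProduct_mulVec, Matrix.vecMul_vecMul,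
          Matrix.mul_adjugate]
        have key : ∀ x : Fin n → ℤ, Matrix.vecMul x (A.det • (1 : Matrix (Fin n) (Fin n) ℤ))
            = A.det • x := by
          intro x; ext i
          simp [Matrix.vecMul, dotProduct, Matrix.one_apply, mul_ite, mul_comm]
        rw [key, smul_dotProduct, smul_eq_mul]
      rw [hdot]
      have hdvd : (m:ℤ) ∣ A.det * dotProduct w (s12lift m u) :=
        Dvd.dvd.mul_right (by rw [hm]; exact Int.natAbs_dvd.mpr dvd_rfl) _
      calc ζ ^ (A.det * dotProduct w (s12lift m u)) = ζ ^ (0:ℤ) :=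
            s12zpow_congr hζ hζm (by simpa using hdvd)
        _ = 1 := zpow_zero ζ
    rw [hpow, one_mul]

/-- separation: an element fixed by all characters is supported on the image lattice -/
lemma s12sep (hA : A.det ≠ 0) (hm : m = A.det.natAbs)
    (hζ1 : ∀ l : ℤ, ζ ^ l = 1 ↔ (m:ℤ) ∣ l)
    (r : AddMonoidAlgebra ℂ (Fin n → ℤ))
    (hr : ∀ u : Fin n → ZMod m, s12sigma ζ hζ (s12bvec A m u) r = r) :
    ↑r.coeff.support ⊆ Set.range (s12fA A) := by
  intro v hv
  have hv' : r.coeff v ≠ 0 := Finsupp.mem_support_iff.mp hv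
  have hdvd : ∀ j : Fin n, (m:ℤ) ∣ dotProduct (A.adjugate.mulVec (Pi.single j 1)) v := by
    intro j
    rcases eq_or_ne m 1 with rfl | hm1
    · exact one_dvd _
    · have hlt : 1 < m := lt_of_le_of_ne (Nat.one_le_iff_ne_zero.mpr (NeZero.ne m)) (Ne.symm hm1)
      have h1 : s12lift m (Pi.single j (1 : ZMod m)) = Pi.single j 1 := by
        ext i
        rcases eq_or_ne i j with rfl | hij
        · haveI : Fact (1 < m) := ⟨hlt⟩
          simp [s12lift, ZMod.val_one m]
        · simp [s12lift, Pi.single_apply, hij]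
      have := congrArg (fun s : AddMonoidAlgebra ℂ (Fin n → ℤ) => s.coeff v)
        (hr (Pi.single j (1 : ZMod m)))
      simp only [s12sigma_apply] at this
      have hpow : ζ ^ (dotProduct (s12bvec A m (Pi.single j (1:ZMod m))) v) = 1 :=
        mul_right_cancel₀ hv' (by simpa using this)
      rw [hζ1] at hpow
      simpa [s12bvec, h1] using hpow
  -- extract w with vecMul v adjugate = m • w
  have hdvd' : ∀ j, (m:ℤ) ∣ Matrix.vecMul v A.adjugate j := by
    intro j
    have := hdvd j
    have heq : dotProduct (A.adjugate.mulVec (Pi.single j 1)) v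
        = Matrix.vecMul v A.adjugate j := by
      rw [dotProduct_comm, Matrix.dotProduct_mulVec]
      simp [dotProduct, Pi.single_apply, mul_ite]
    rwa [heq] at this
  set w : Fin n → ℤ := fun j => Matrix.vecMul v A.adjugate j / m with hw
  have hmw : Matrix.vecMul v A.adjugate = (m:ℤ) • w := by
    ext j
    simp only [Pi.smul_apply, smul_eq_mul, hw]
    exact (Int.mul_ediv_cancel' (hdvd' j)).symm
  have hkey : A.det • v = (m:ℤ) • Matrix.vecMul w A := by
    have h1 : Matrix.vecMul (Matrix.vecMul v A.adjugate) A = A.det • v := by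
      rw [Matrix.vecMul_vecMul, Matrix.adjugate_mul]
      ext i
      simp [Matrix.vecMul, dotProduct, Matrix.one_apply, mul_ite, mul_comm]
    rw [← h1, hmw, Matrix.smul_vecMul]
  have hm0 : (m:ℤ) ≠ 0 := by
    rw [hm]
    exact_mod_cast Int.natAbs_ne_zero.mpr hA
  have hcancel : ∀ x y : Fin n → ℤ, (m:ℤ) • x = (m:ℤ) • y → x = y := by
    intro x y hxy
    ext i
    have := congrFun hxy i
    simp only [Pi.smul_apply, smul_eq_mul] at this
    exact mul_left_cancel₀ hm0 this
  rcases Int.natAbs_eq A.det with hd | hd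
  · rw [← hm] at hd
    refine ⟨w, ?_⟩
    show Matrix.vecMul w A = v
    apply hcancel
    rw [← hkey, hd]
  · rw [← hm] at hd
    refine ⟨-w, ?_⟩
    show Matrix.vecMul (-w) A = v
    rw [Matrix.neg_vecMul]
    apply hcancel
    rw [smul_neg, ← hkey, hd, neg_smul, neg_neg]

lemma s12mem_range_phiHat (A : Matrix (Fin n) (Fin n) ℤ) (r : AddMonoidAlgebra ℂ (Fin n → ℤ))
    (h : ↑r.coeff.support ⊆ Set.range (s12fA A)) :
    ∃ e : AddMonoidAlgebra ℂ (Fin n → ℤ), s12phiHat A e = r := by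
  classical
  obtain ⟨t, ht⟩ := s12mem_range_mapDomain (s12fA A) r.coeff h
  exact ⟨AddMonoidAlgebra.ofCoeff t, congrArg AddMonoidAlgebra.ofCoeff ht⟩

end Chars

end Stmt12Aux

noncomputable section Stmt12Aux2

section Structure

variable {n : ℕ}

lemma s12single_isUnit (w : Fin n → ℤ) :
    IsUnit (AddMonoidAlgebra.single w (1:ℂ) : AddMonoidAlgebra ℂ (Fin n → ℤ)) := by
  refine isUnit_iff_exists_inv.mpr ⟨AddMonoidAlgebra.single (-w) 1, ?_⟩
  rw [AddMonoidAlgebra.single_mul_single]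
  simp [AddMonoidAlgebra.one_def]

lemma s12nonneg_mem_range (v : Fin n → ℤ) (hv : ∀ i, 0 ≤ v i) :
    v ∈ Set.range (s12coe n) := by
  refine ⟨Finsupp.equivFunOnFinite.symm (fun i => (v i).toNat), ?_⟩
  ext i
  show ((Finsupp.equivFunOnFinite.symm (fun i => (v i).toNat)) i : ℤ) = v i
  rw [Finsupp.coe_equivFunOnFinite_symm]
  exact Int.toNat_of_nonneg (hv i)

/-- every Laurent polynomial is a monomial times an honest polynomial -/
lemma s12structure (r : AddMonoidAlgebra ℂ (Fin n → ℤ)) :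
    ∃ (w : Fin n → ℤ) (r₀ : MvPolynomial (Fin n) ℂ),
      r = AddMonoidAlgebra.single w 1 * s12iota n r₀ := by
  classical
  obtain ⟨w, hwdef⟩ : ∃ w : Fin n → ℤ,
      ∀ i, w i = -(((r.coeff.support.sup fun v => (v i).natAbs) : ℕ) : ℤ) := ⟨_, fun i => rfl⟩
  set r' : AddMonoidAlgebra ℂ (Fin n → ℤ) := AddMonoidAlgebra.single (-w) 1 * r with hr'
  have hsupp : ↑r'.coeff.support ⊆ Set.range (s12coe n) := by
    intro v hv
    have hsub := AddMonoidAlgebra.support_coeff_mul_subset (AddMonoidAlgebra.single (-w) (1:ℂ)) r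
    have hv' := hsub hv
    rw [Finset.mem_add] at hv'
    obtain ⟨a, ha, b, hb, rfl⟩ := hv'
    have ha' : a = -w := by
      have := Finsupp.support_single_subset ha
      simpa using this
    subst ha'
    apply s12nonneg_mem_range
    intro i
    have h1 : (b i).natAbs ≤ r.coeff.support.sup (fun v => (v i).natAbs) :=
      Finset.le_sup (f := fun v => (v i).natAbs) hb
    have h2 : -((b i).natAbs : ℤ) ≤ b i := by
      rw [← Int.abs_eq_natAbs]
      exact neg_abs_le _
    have h3 : (((b i).natAbs : ℕ) : ℤ) ≤ ((r.coeff.support.sup fun v => (v i).natAbs : ℕ) : ℤ) :=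
      Int.ofNat_le.mpr h1
    have h4 : (-w + b) i = -(w i) + b i := rfl
    rw [h4, hwdef i, neg_neg]
    linarith
  obtain ⟨t, ht⟩ := s12mem_range_mapDomain (s12coe n) r'.coeff hsupp
  refine ⟨w, AddMonoidAlgebra.ofCoeff t, ?_⟩
  have : s12iota n (AddMonoidAlgebra.ofCoeff t) = r' := congrArg AddMonoidAlgebra.ofCoeff ht
  rw [this, hr', ← mul_assoc, AddMonoidAlgebra.single_mul_single]
  have hww : w + -w = 0 := by ext i; simp
  rw [hww, mul_one, ← AddMonoidAlgebra.one_def, one_mul]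

lemma s12prime_factor (e₀ : MvPolynomial (Fin n) ℂ) (h0 : e₀ ≠ 0)
    (hu : ¬ IsUnit (s12iota n e₀)) :
    ∃ g : MvPolynomial (Fin n) ℂ, Prime g ∧ g ∣ e₀ ∧ ¬ IsUnit (s12iota n g) := by
  obtain ⟨f, hf, hfe⟩ := UniqueFactorizationMonoid.exists_prime_factors e₀ h0
  by_contra hcon
  push_neg at hcon
  have hall : ∀ g ∈ f, IsUnit (s12iota n g) := by
    intro g hg
    exact hcon g (hf g hg) (Multiset.dvd_prod hg |>.trans hfe.dvd)
  apply hu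
  obtain ⟨u, hu'⟩ := hfe
  rw [← hu']
  rw [map_mul]
  apply IsUnit.mul _ ((Units.isUnit u).map (s12iota n))
  rw [map_multiset_prod]
  revert hall
  refine Multiset.induction_on f (by simp) ?_
  intro a s ih hall
  rw [Multiset.map_cons, Multiset.prod_cons]
  exact IsUnit.mul (hall a (Multiset.mem_cons_self a s))
    (ih (fun g hg => hall g (Multiset.mem_cons_of_mem hg)))

lemma s12iota_dvd_descend (g s : MvPolynomial (Fin n) ℂ) (hg : Prime g)
    (hgu : ¬ IsUnit (s12iota n g)) (h : s12iota n g ∣ s12iota n s) : g ∣ s := by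
  obtain ⟨r, hr⟩ := h
  obtain ⟨w, r₀, rfl⟩ := s12structure r
  set u : Fin n → ℤ := fun i => max 0 (-(w i)) with hu
  have hu0 : ∀ i, 0 ≤ u i := fun i => le_max_left _ _
  have hwu : ∀ i, 0 ≤ w i + u i := by intro i; simp [hu]; omega
  obtain ⟨u', hu'⟩ := s12nonneg_mem_range u hu0
  obtain ⟨w', hw'⟩ := s12nonneg_mem_range (w + u) hwu
  have hkey : s12iota n ((MvPolynomial.monomial u') 1 * s)
      = s12iota n (g * (MvPolynomial.monomial w') 1 * r₀) := by
    have hsw : (AddMonoidAlgebra.single (w+u) (1:ℂ) : AddMonoidAlgebra ℂ (Fin n → ℤ))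
        = AddMonoidAlgebra.single w 1 * AddMonoidAlgebra.single u 1 := by
      rw [AddMonoidAlgebra.single_mul_single, mul_one]
    rw [map_mul, map_mul, map_mul, s12iota_monomial, s12iota_monomial, hu', hw', hr, hsw]
    ring
  have heq := s12iota_inj hkey
  have hdvd : g ∣ (MvPolynomial.monomial u') 1 * s :=
    ⟨(MvPolynomial.monomial w') 1 * r₀, by rw [heq]; ring⟩
  rcases (hg.2.2 _ _ hdvd) with hmon | hs
  · exfalso
    apply hgu
    have hmeq : (MvPolynomial.monomial u') (1:ℂ) = (u'.prod fun i k => MvPolynomial.X i ^ k) := by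
      rw [MvPolynomial.monomial_eq, map_one, one_mul]
    rw [hmeq] at hmon
    obtain ⟨j, _, hj⟩ := hg.exists_mem_finset_dvd hmon
    have hgX : g ∣ MvPolynomial.X j := hg.dvd_of_dvd_pow hj
    obtain ⟨qq, hqq⟩ := hgX
    have hdX : s12iota n g ∣ s12iota n (MvPolynomial.X j) :=
      ⟨s12iota n qq, by rw [← map_mul, hqq]⟩
    apply isUnit_of_dvd_unit hdX
    have hX : (MvPolynomial.X j : MvPolynomial (Fin n) ℂ)
        = (MvPolynomial.monomial (Finsupp.single j 1)) (1:ℂ) := rfl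
    rw [hX, s12iota_monomial]
    exact s12single_isUnit _
  · exact hs

end Structure

/-- main descent lemma -/
lemma s12descend {n : ℕ} (A : Matrix (Fin n) (Fin n) ℤ) (hA : A.det ≠ 0)
    (c : AddMonoidAlgebra ℂ (Fin n → ℤ)) (hc0 : c ≠ 0) (hcu : ¬ IsUnit c)
    (p : ℕ → MvPolynomial (Fin n) ℂ)
    (hdvd : ∀ i, c ∣ s12phiHat A (s12iota n (p i))) :
    ∃ g : MvPolynomial (Fin n) ℂ, Prime g ∧ ∀ i, g ∣ p i := by
  classical
  set m := A.det.natAbs with hm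
  have hmne : m ≠ 0 := Int.natAbs_ne_zero.mpr hA
  haveI : NeZero m := ⟨hmne⟩
  obtain ⟨ζ, hζp⟩ : ∃ ζ : ℂ, IsPrimitiveRoot ζ m := ⟨_, Complex.isPrimitiveRoot_exp m hmne⟩
  have hζ0 : ζ ≠ 0 := hζp.ne_zero hmne
  have hζm : ζ ^ (m:ℤ) = 1 := hζp.zpow_eq_one
  have hζ1 : ∀ l : ℤ, ζ ^ l = 1 ↔ (m:ℤ) ∣ l := fun l => hζp.zpow_eq_one_iff_dvd l
  have hsupp := s12sep hA hm hζ1 (s12N A m ζ hζ0 c)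
    (fun u => s12N_fixed (hζ := hζ0) hζm u c)
  obtain ⟨e, he'⟩ := s12mem_range_phiHat A _ hsupp
  have he0 : e ≠ 0 := by
    rintro rfl
    exact s12N_ne_zero c hc0 (by simpa using he'.symm)
  have heu : ¬ IsUnit e := fun h => hcu (s12N_isUnit c (he' ▸ h.map (s12phiHat A)))
  set M := Fintype.card (Fin n → ZMod m) with hM
  have hediv : ∀ i, e ∣ (s12iota n (p i)) ^ M := by
    intro i
    obtain ⟨r, hri⟩ := hdvd i
    obtain ⟨sN, hsN'⟩ := s12mem_range_phiHat A _
      (s12sep hA hm hζ1 (s12N A m ζ hζ0 r) (fun u => s12N_fixed (hζ := hζ0) hζm u r))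
    have htfix : ∀ u : Fin n → ZMod m,
        s12sigma ζ hζ0 (s12bvec A m u) (s12phiHat A (s12iota n (p i)))
        = s12phiHat A (s12iota n (p i)) := by
      intro u
      apply s12sigma_fixes hm hζm
      rw [s12phiHat_apply]
      intro v hv
      obtain ⟨x, _, rfl⟩ := Finset.mem_image.mp (Finsupp.mapDomain_support hv)
      exact ⟨x, rfl⟩
    have hNt : s12N A m ζ hζ0 (s12phiHat A (s12iota n (p i)))
        = (s12phiHat A (s12iota n (p i))) ^ M := by
      rw [s12N, Finset.prod_congr rfl (fun u _ => htfix u), Finset.prod_const,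
        Finset.card_univ]
    have hmain : s12phiHat A (e * sN) = s12phiHat A ((s12iota n (p i)) ^ M) := by
      rw [map_mul, he', hsN', map_pow, ← hNt, hri, s12N_mul]
    exact ⟨sN, (s12phiHat_inj A hA hmain).symm ▸ rfl⟩
  obtain ⟨w, e₀, hwe⟩ := s12structure e
  have he₀0 : e₀ ≠ 0 := by
    rintro rfl
    apply he0
    rw [hwe]
    simp
  have hι : ¬ IsUnit (s12iota n e₀) := by
    intro h
    exact heu (hwe ▸ (s12single_isUnit w).mul h)
  obtain ⟨g, hgp, hge, hgu⟩ := s12prime_factor e₀ he₀0 hι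
  refine ⟨g, hgp, fun i => ?_⟩
  have h1 : s12iota n g ∣ e := by
    refine dvd_trans (map_dvd (s12iota n) hge) ?_
    exact ⟨AddMonoidAlgebra.single w 1, by rw [hwe]; ring⟩
  have h2 : s12iota n g ∣ s12iota n ((p i) ^ M) := by
    rw [map_pow]
    exact h1.trans (hediv i)
  exact hgp.dvd_of_dvd_pow (s12iota_dvd_descend g ((p i) ^ M) hgp hgu h2)

end Stmt12Aux2


/-- Let `F ∈ ℂ[x₁,…,xₙ][z]` be irreducible of degree `d ≥ 1` in `z` and `A ∈ ℤ^{n×n}`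
nonsingular. Then every irreducible factor of the Laurent polynomial `F(x^A, z)`
(obtained by substituting `xⱼ` by the monomial with exponent vector the `j`-th row of `A`)
has positive degree in `z`; equivalently, `F(x^A, z)` has no nontrivial factors coming
from `ℂ[x^{±1}]_G`. -/
theorem stmt_12 (n : ℕ) (F : Polynomial (MvPolynomial (Fin n) ℂ))
    (hF : Irreducible F) (d : ℕ) (hd : F.natDegree = d) (hd1 : 1 ≤ d)
    (A : Matrix (Fin n) (Fin n) ℤ) (hA : A.det ≠ 0) :
    ∀ q : Polynomial (AddMonoidAlgebra ℂ (Fin n → ℤ)), Irreducible q →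
      q ∣ F.map (MvPolynomial.eval₂Hom (AddMonoidAlgebra.singleZeroRingHom)
        (fun j => AddMonoidAlgebra.single (fun i => A j i) 1)) →
      0 < q.natDegree := by
  intro q hq hqdvd
  by_contra hdeg
  have hq0 : q.natDegree = 0 := Nat.eq_zero_of_not_pos hdeg
  obtain ⟨c, hc⟩ := Polynomial.natDegree_eq_zero.mp hq0
  have hc0 : c ≠ 0 := by
    rintro rfl
    rw [map_zero] at hc
    exact hq.ne_zero hc.symm
  have hcu : ¬ IsUnit c := fun h => hq.not_isUnit (hc ▸ (Polynomial.isUnit_C.mpr h))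
  rw [s12phi_eq] at hqdvd
  have hdvd : ∀ i, c ∣ s12phiHat A (s12iota n (F.coeff i)) := by
    intro i
    have h1 : Polynomial.C c ∣ F.map ((s12phiHat A).comp (s12iota n)) := hc ▸ hqdvd
    have h2 := (Polynomial.C_dvd_iff_dvd_coeff c _).mp h1 i
    rwa [Polynomial.coeff_map] at h2
  obtain ⟨g, hgp, hgd⟩ := s12descend A hA c hc0 hcu (fun i => F.coeff i) hdvd
  have hCg : Polynomial.C g ∣ F := (Polynomial.C_dvd_iff_dvd_coeff g F).mpr hgd
  obtain ⟨t, ht⟩ := hCg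
  rcases hF.isUnit_or_isUnit ht with h | h
  · exact hgp.not_unit (Polynomial.isUnit_C.mp h)
  · have h0 : F.natDegree = 0 := by
      rw [ht]
      have := Polynomial.natDegree_mul_le (p := Polynomial.C g) (q := t)
      have ht0 : t.natDegree = 0 := Polynomial.natDegree_eq_zero_of_isUnit h
      simp [Polynomial.natDegree_C] at this
      omega
    omega
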